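/- arXiv:0902.2579 — 2 statements merged into one kernel-verified Lean document; each statement's English description precedes it below -/
import Mathlib

section
/- Let h : [0,∞) → ℝ be smooth and rapidly decaying together with all its derivatives. Then for every integer k ≥ 0 and every s > 0, ∫_s^∞ [ ( (d/dt) ∘ M_{1/t} )^k h ](t) / √(t²−s²) dt = ( (1/s)(d/ds) )^k ∫_s^∞ h(t)/√(t²−s²) dt, where ( (d/dt) ∘ M_{1/t} )^k denotes the k-fold iterate of the operator taking h to t ↦ d/dt ( h(t)/t ), and ( (1/s)(d/ds) )^k is the k-fold iterate of v ↦ (1/s)v'(s). -/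
open MeasureTheory Function

noncomputable section

/-- The constant `c_n`. -/
def cnConst (n : ℕ) : ℝ :=
  if Even n then (-1 : ℝ) ^ ((n - 2) / 2) / (2 * Real.pi) ^ (n / 2)
  else (-1 : ℝ) ^ ((n - 3) / 2) / (2 * (2 * Real.pi) ^ ((n - 1) / 2))

/-- The operator `v ↦ (1/s) v'(s)` on complex-valued functions. -/
def invDerivC (v : ℝ → ℂ) : ℝ → ℂ := fun s => deriv v s / (s : ℂ)

/-- The operator `v ↦ (1/s) v'(s)` on real-valued functions. -/
def invDerivR (v : ℝ → ℝ) : ℝ → ℝ := fun s => deriv v s / s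

/-- The free-space outgoing Green's function `G(s,λ)` of the Helmholtz equation. -/
def GreenG (n : ℕ) (s lam : ℝ) : ℂ :=
  if Even n then
    (cnConst n : ℂ) *
      (invDerivC^[(n - 2) / 2]
        (fun s' => ∫ t in Set.Ioi s',
          Complex.exp (Complex.I * lam * t) / (Real.sqrt (t ^ 2 - s' ^ 2) : ℂ)) s)
  else
    (cnConst n : ℂ) *
      (invDerivC^[(n - 3) / 2] (fun s' => Complex.exp (Complex.I * lam * s') / (s' : ℂ)) s)

/-- The transform `W` on real-valued functions. -/
def Wtr (n : ℕ) (v : ℝ → ℝ) (s : ℝ) : ℝ :=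
  if Even n then
    cnConst n * (invDerivR^[(n - 2) / 2]
      (fun s' => ∫ t in Set.Ioi s', v t / Real.sqrt (t ^ 2 - s' ^ 2)) s)
  else
    cnConst n * (invDerivR^[(n - 3) / 2] (fun s' => v s' / s') s)

/-- The transform `W` on complex-valued functions. -/
def WtrC (n : ℕ) (v : ℝ → ℂ) (s : ℝ) : ℂ :=
  if Even n then
    (cnConst n : ℂ) * (invDerivC^[(n - 2) / 2]
      (fun s' => ∫ t in Set.Ioi s', v t / (Real.sqrt (t ^ 2 - s' ^ 2) : ℂ)) s)
  else
    (cnConst n : ℂ) * (invDerivC^[(n - 3) / 2] (fun s' => v s' / (s' : ℂ)) s)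

abbrev Esp (n : ℕ) := EuclideanSpace ℝ (Fin n)

/-- The unit sphere centered at the origin. -/
def unitSphere (n : ℕ) : Set (Esp n) := Metric.sphere 0 1

/-- The surface measure: `(n-1)`-dimensional Hausdorff measure. -/
def sphMeasure (n : ℕ) : Measure (Esp n) := μH[(n : ℝ) - 1]

/-- The Laplacian, as the sum of second directional derivatives along coordinate axes. -/
def lapl {n : ℕ} (f : Esp n → ℝ) (x : Esp n) : ℝ :=
  ∑ i : Fin n, iteratedDeriv 2 (fun t : ℝ => f (x + t • EuclideanSpace.single i (1 : ℝ))) 0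

/-- The spherical Radon transform with centers on the unit sphere. -/
def RadonS (n : ℕ) (f : Esp n → ℝ) (y : Esp n) (r : ℝ) : ℝ :=
  ∫ ω in unitSphere n, f (y + r • ω) * r ^ (n - 1) ∂(sphMeasure n)

/-- The spherical means operator with centers on the unit sphere. -/
def Msph (n : ℕ) (f : Esp n → ℝ) (y : Esp n) (r : ℝ) : ℝ :=
  (1 / (sphMeasure n (unitSphere n)).toReal) * ∫ ω in unitSphere n, f (y + r • ω) ∂(sphMeasure n)

/-- The kernel `K_n(y,s)` built from the real and imaginary parts of `G`. -/
def Kker (n : ℕ) (f : Esp n → ℝ) (y : Esp n) (s : ℝ) : ℝ :=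
  ∫ lam in Set.Ioi (0 : ℝ),
    lam * (GreenG n s lam).re * ∫ r in Set.Ioi (0 : ℝ), RadonS n f y r * (GreenG n r lam).im

/-- The time Fourier transform `(1/2π) ∫ v(t) e^{iλt} dt` of a real-valued function. -/
def timeFT (v : ℝ → ℝ) (lam : ℝ) : ℂ :=
  (1 / (2 * Real.pi)) * ∫ t : ℝ, (v t : ℂ) * Complex.exp (Complex.I * lam * t)

/-- The operator `w ↦ d/dr (w(r)/r)`. -/
def DWop (w : ℝ → ℝ) : ℝ → ℝ := fun r => deriv (fun r' => w r' / r') r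


namespace S17

open Set Filter

def sq2 (s τ : ℝ) : ℝ := Real.sqrt (s ^ 2 + τ ^ 2)

lemma sq2_pos {s : ℝ} (hs : 0 < s) (τ : ℝ) : 0 < sq2 s τ :=
  Real.sqrt_pos.2 (by positivity)

lemma le_sq2 {s : ℝ} (hs : 0 ≤ s) (τ : ℝ) : s ≤ sq2 s τ := by
  rw [sq2, Real.le_sqrt hs (by positivity)]; nlinarith

lemma le_sq2' (s : ℝ) {τ : ℝ} (hτ : 0 ≤ τ) : τ ≤ sq2 s τ := by
  rw [sq2, Real.le_sqrt hτ (by positivity)]; nlinarith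

/-- smooth on `(0,∞)` and rapidly decaying with all derivatives. -/
def Nice (g : ℝ → ℝ) : Prop :=
  ContDiffOn ℝ (⊤ : ℕ∞) g (Set.Ioi 0) ∧
  ∀ m k : ℕ, ∃ C : ℝ, ∀ t : ℝ, 1 ≤ t → |iteratedDeriv m g t| ≤ C * t ^ (-(k : ℝ))

lemma iteratedDerivWithin_isOpen {f : ℝ → ℝ} {s : Set ℝ} (hs : IsOpen s) {x : ℝ}
    (hx : x ∈ s) (n : ℕ) : iteratedDerivWithin n f s x = iteratedDeriv n f x := by
  rw [iteratedDerivWithin_eq_iteratedFDerivWithin, iteratedDeriv_eq_iteratedFDeriv,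
    iteratedFDerivWithin_of_isOpen n hs hx]

lemma iteratedDeriv_inv_eq (m : ℕ) : ∀ t : ℝ, 0 < t →
    iteratedDeriv m (fun x : ℝ => x⁻¹) t
      = (-1 : ℝ) ^ m * m.factorial * t ^ (-1 - (m : ℤ)) := by
  induction m with
  | zero => intro t ht; simp [zpow_neg]
  | succ m IH =>
    intro t ht
    rw [iteratedDeriv_succ]
    have hev : iteratedDeriv m (fun x : ℝ => x⁻¹)
        =ᶠ[nhds t] fun x => (-1 : ℝ) ^ m * m.factorial * x ^ (-1 - (m : ℤ)) :=
      Filter.eventuallyEq_of_mem (isOpen_Ioi.mem_nhds ht) (fun x hx => IH x hx)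
    rw [hev.deriv_eq]
    rw [((hasDerivAt_zpow (-1 - (m : ℤ)) t (Or.inl (ne_of_gt ht))).const_mul
      ((-1 : ℝ) ^ m * m.factorial)).deriv]
    have h1 : (-1 - (m : ℤ)) - 1 = -1 - ((m : ℕ) + 1 : ℕ) := by push_cast; ring
    rw [h1]
    have h2 : ((-1 - (m : ℤ) : ℤ) : ℝ) = -(m + 1) := by push_cast; ring
    rw [h2, pow_succ, Nat.factorial_succ]
    push_cast
    ring

lemma iteratedDeriv_inv_bound (m : ℕ) {t : ℝ} (ht : 1 ≤ t) :
    |iteratedDeriv m (fun x : ℝ => x⁻¹) t| ≤ m.factorial := by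
  have ht0 : (0:ℝ) < t := by linarith
  rw [iteratedDeriv_inv_eq m t ht0, abs_mul, abs_mul, abs_pow, abs_neg, abs_one, one_pow,
    one_mul, Nat.abs_cast, abs_of_pos (zpow_pos ht0 _)]
  have h1 : t ^ (-1 - (m : ℤ)) ≤ 1 := by
    calc t ^ (-1 - (m : ℤ)) ≤ t ^ (0 : ℤ) := by
          apply zpow_le_zpow_right₀ ht; omega
      _ = 1 := zpow_zero t
  nlinarith [show (0:ℝ) < m.factorial from Nat.cast_pos.2 m.factorial_pos,
    zpow_pos ht0 (-1 - (m:ℤ))]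

lemma nice_deriv {g : ℝ → ℝ} (hg : Nice g) : Nice (deriv g) := by
  obtain ⟨hsm, hdec⟩ := hg
  refine ⟨hsm.deriv_of_isOpen isOpen_Ioi (by simp), fun m k => ?_⟩
  obtain ⟨C, hC⟩ := hdec (m + 1) k
  exact ⟨C, fun t ht => by rw [← iteratedDeriv_succ']; exact hC t ht⟩

lemma nice_mul_inv {g : ℝ → ℝ} (hg : Nice g) : Nice (fun r => g r * r⁻¹) := by
  obtain ⟨hsm, hdec⟩ := hg
  have hinv : ContDiffOn ℝ (⊤ : ℕ∞) (fun r : ℝ => r⁻¹) (Ioi 0) :=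
    contDiffOn_id.inv (fun x hx => ne_of_gt hx)
  refine ⟨hsm.mul hinv, fun m k => ?_⟩
  choose C hC using hdec
  refine ⟨∑ i ∈ Finset.range (m + 1),
    (m.choose i : ℝ) * |C i k| * ((m - i).factorial : ℝ), fun t ht => ?_⟩
  have ht0 : (0:ℝ) < t := by linarith
  have htm : t ∈ Ioi (0:ℝ) := ht0
  have hrp : (0:ℝ) < t ^ (-(k:ℝ)) := Real.rpow_pos_of_pos ht0 _
  have key : |iteratedDeriv m (fun r => g r * r⁻¹) t| ≤
      ∑ i ∈ Finset.range (m + 1), (m.choose i : ℝ) * |iteratedDeriv i g t| *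
        |iteratedDeriv (m - i) (fun x : ℝ => x⁻¹) t| := by
    calc |iteratedDeriv m (fun r => g r * r⁻¹) t|
        = ‖iteratedFDerivWithin ℝ m (fun r => g r * r⁻¹) (Ioi 0) t‖ := by
          rw [norm_iteratedFDerivWithin_eq_norm_iteratedDerivWithin,
            iteratedDerivWithin_isOpen isOpen_Ioi htm, Real.norm_eq_abs]
      _ ≤ ∑ i ∈ Finset.range (m + 1), (m.choose i : ℝ) *
            ‖iteratedFDerivWithin ℝ i g (Ioi 0) t‖ *
            ‖iteratedFDerivWithin ℝ (m - i) (fun x : ℝ => x⁻¹) (Ioi 0) t‖ :=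
          norm_iteratedFDerivWithin_mul_le hsm hinv isOpen_Ioi.uniqueDiffOn htm (by exact_mod_cast le_top)
      _ = _ := Finset.sum_congr rfl fun i _ => by
          rw [norm_iteratedFDerivWithin_eq_norm_iteratedDerivWithin,
            norm_iteratedFDerivWithin_eq_norm_iteratedDerivWithin,
            iteratedDerivWithin_isOpen isOpen_Ioi htm, iteratedDerivWithin_isOpen isOpen_Ioi htm,
            Real.norm_eq_abs, Real.norm_eq_abs]
  refine key.trans ?_
  rw [Finset.sum_mul]
  refine Finset.sum_le_sum fun i _ => ?_
  have h1 : |iteratedDeriv i g t| ≤ |C i k| * t ^ (-(k:ℝ)) :=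
    (hC i k t ht).trans (mul_le_mul_of_nonneg_right (le_abs_self _) hrp.le)
  have h2 : |iteratedDeriv (m - i) (fun x : ℝ => x⁻¹) t| ≤ ((m - i).factorial : ℝ) :=
    iteratedDeriv_inv_bound _ ht
  calc (m.choose i : ℝ) * |iteratedDeriv i g t| * |iteratedDeriv (m - i) (fun x : ℝ => x⁻¹) t|
      ≤ (m.choose i : ℝ) * (|C i k| * t ^ (-(k:ℝ))) * ((m - i).factorial : ℝ) := by
        gcongr
    _ = (m.choose i : ℝ) * |C i k| * ((m - i).factorial : ℝ) * t ^ (-(k:ℝ)) := by ring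

lemma nice_DW {g : ℝ → ℝ} (hg : Nice g) : Nice (DWop g) := by
  have : DWop g = deriv (fun r => g r * r⁻¹) := by
    funext r; simp [DWop, div_eq_mul_inv]
  rw [this]
  exact nice_deriv (nice_mul_inv hg)

/-- change of variables `t = sqrt (s² + τ²)`. -/
lemma subst (g : ℝ → ℝ) {s : ℝ} (hs : 0 < s) :
    ∫ t in Ioi s, g t / Real.sqrt (t ^ 2 - s ^ 2)
      = ∫ τ in Ioi (0 : ℝ), g (sq2 s τ) / sq2 s τ := by
  have hderiv : ∀ τ ∈ Ioi (0:ℝ),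
      HasDerivWithinAt (fun τ => sq2 s τ) (τ / sq2 s τ) (Ioi 0) τ := by
    intro τ hτ
    have h1 : HasDerivAt (fun τ : ℝ => s ^ 2 + τ ^ 2) (2 * τ) τ := by
      simpa using ((hasDerivAt_pow 2 τ).const_add (s ^ 2))
    have h2 := (Real.hasDerivAt_sqrt (by positivity : s ^ 2 + τ ^ 2 ≠ 0)).comp τ h1
    have : 1 / (2 * Real.sqrt (s ^ 2 + τ ^ 2)) * (2 * τ) = τ / sq2 s τ := by
      rw [sq2]; field_simp
    exact (this ▸ h2).hasDerivWithinAt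
  have hmono : StrictMonoOn (fun τ => sq2 s τ) (Ioi 0) := by
    intro a ha b hb hab
    simp only [sq2]
    apply Real.sqrt_lt_sqrt (by positivity)
    simp only [mem_Ioi] at ha hb
    nlinarith
  have himg : (fun τ => sq2 s τ) '' Ioi 0 = Ioi s := by
    ext u
    constructor
    · rintro ⟨τ, hτ, rfl⟩
      simp only [mem_Ioi] at hτ ⊢
      have : Real.sqrt (s ^ 2) < sq2 s τ := by
        apply Real.sqrt_lt_sqrt (by positivity); nlinarith
      rwa [Real.sqrt_sq hs.le] at this
    · intro hu
      simp only [mem_Ioi] at hu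
      refine ⟨Real.sqrt (u ^ 2 - s ^ 2), ?_, ?_⟩
      · simp only [mem_Ioi]
        apply Real.sqrt_pos.2; nlinarith
      · simp only [sq2, Real.sq_sqrt (by nlinarith : (0:ℝ) ≤ u ^ 2 - s ^ 2)]
        rw [show s ^ 2 + (u ^ 2 - s ^ 2) = u ^ 2 by ring, Real.sqrt_sq (by linarith)]
  rw [← himg, integral_image_eq_integral_abs_deriv_smul measurableSet_Ioi hderiv
    (hmono.injOn) (fun t => g t / Real.sqrt (t ^ 2 - s ^ 2))]
  refine setIntegral_congr_fun measurableSet_Ioi fun τ hτ => ?_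
  simp only [mem_Ioi] at hτ
  have h0 : sq2 s τ ≠ 0 := (sq2_pos hs τ).ne'
  have h1 : (sq2 s τ) ^ 2 - s ^ 2 = τ ^ 2 := by
    rw [sq2, Real.sq_sqrt (by positivity)]; ring
  rw [smul_eq_mul, h1, Real.sqrt_sq hτ.le, abs_of_pos (div_pos hτ (sq2_pos hs τ))]
  field_simp

/-- uniform bound of the composed integrand. -/
lemma bound_aux {G : ℝ → ℝ} (hGc : ContinuousOn G (Ioi 0))
    {C : ℝ} (hGd : ∀ r : ℝ, 1 ≤ r → |G r| ≤ C * r ^ (-(2 : ℝ)))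
    {a b : ℝ} (ha : 0 < a) (hb : a ≤ b) :
    ∃ D : ℝ, 0 ≤ D ∧ ∀ x ∈ Icc a b, ∀ τ : ℝ, 0 < τ →
      |G (sq2 x τ)| ≤ D * (1 + τ ^ 2)⁻¹ := by
  obtain ⟨M, hM⟩ :=
    (isCompact_Icc (a := a) (b := Real.sqrt (b ^ 2 + 1))).exists_bound_of_continuousOn
      (hGc.mono (fun y hy => lt_of_lt_of_le ha hy.1))
  refine ⟨2 * (max M 0 + max C 0), by positivity, ?_⟩
  intro x hx τ hτ
  obtain ⟨hx1, hx2⟩ := hx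
  have hx0 : 0 < x := lt_of_lt_of_le ha hx1
  have hsq : 0 < sq2 x τ := sq2_pos hx0 τ
  have hMnn : M ≤ max M 0 := le_max_left _ _
  have hCnn : C ≤ max C 0 := le_max_left _ _
  have hD : (0:ℝ) ≤ 2 * (max M 0 + max C 0) := by positivity
  have hp : (0:ℝ) < 1 + τ ^ 2 := by positivity
  suffices key : |G (sq2 x τ)| * (1 + τ ^ 2) ≤ 2 * (max M 0 + max C 0) by
    have := (le_div_iff₀ hp).2 key
    rwa [div_eq_mul_inv] at this
  rcases le_or_gt τ 1 with hτ1 | hτ1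
  · have hin : sq2 x τ ∈ Icc a (Real.sqrt (b ^ 2 + 1)) := by
      constructor
      · exact le_trans hx1 (le_sq2 hx0.le τ)
      · rw [sq2]
        apply Real.sqrt_le_sqrt; nlinarith
    have h1 : |G (sq2 x τ)| ≤ max M 0 := le_trans (le_of_eq (Real.norm_eq_abs _).symm)
      ((hM _ hin).trans hMnn)
    have h2 : (1:ℝ) + τ ^ 2 ≤ 2 := by nlinarith
    nlinarith [mul_le_mul h1 h2 hp.le (le_trans (abs_nonneg _) h1), le_max_right M 0,
      le_max_right C 0]
  · have hτ0 : (1:ℝ) ≤ τ := hτ1.le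
    have hge : (1:ℝ) ≤ sq2 x τ := le_trans hτ0 (le_sq2' x hτ.le)
    have e : (sq2 x τ) ^ (-(2:ℝ)) = ((sq2 x τ) ^ 2)⁻¹ := by
      rw [show (-(2:ℝ)) = ((-2 : ℤ) : ℝ) by norm_num, Real.rpow_intCast, zpow_neg]
      norm_cast
    have hI : |G (sq2 x τ)| ≤ max C 0 * (τ ^ 2)⁻¹ := by
      refine (hGd _ hge).trans ?_
      rw [e]
      have h3 : ((sq2 x τ) ^ 2)⁻¹ ≤ (τ ^ 2)⁻¹ :=
        inv_anti₀ (by positivity) (by nlinarith [le_sq2' x hτ.le])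
      have h4 : (0:ℝ) < ((sq2 x τ) ^ 2)⁻¹ := by positivity
      nlinarith [le_max_right C 0]
    have huτ : (τ ^ 2)⁻¹ * τ ^ 2 = 1 := by field_simp
    have hu0 : (0:ℝ) ≤ (τ ^ 2)⁻¹ := by positivity
    have hu1 : (τ ^ 2)⁻¹ ≤ 1 := by nlinarith
    nlinarith [mul_le_mul_of_nonneg_right hI hp.le, le_max_right C 0, le_max_right M 0]

/-- decay of order 2 for the 0-th derivative, in the convenient form. -/
lemma decay2 {g : ℝ → ℝ} (hg : Nice g) :
    ∃ C : ℝ, ∀ r : ℝ, 1 ≤ r → |g r| ≤ C * r ^ (-(2:ℝ)) := by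
  obtain ⟨C, hC⟩ := hg.2 0 2
  refine ⟨C, fun r hr => ?_⟩
  have := hC r hr
  rwa [iteratedDeriv_zero, show -((2:ℕ):ℝ) = -(2:ℝ) by norm_num] at this

lemma decay2' {g : ℝ → ℝ} (hg : Nice g) :
    ∃ C : ℝ, ∀ r : ℝ, 1 ≤ r → |g r / r| ≤ C * r ^ (-(2:ℝ)) := by
  obtain ⟨C, hC⟩ := decay2 hg
  refine ⟨C, fun r hr => ?_⟩
  refine le_trans ?_ (hC r hr)
  rw [abs_div, abs_of_pos (by linarith : (0:ℝ) < r)]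
  exact div_le_self (abs_nonneg _) hr

lemma sq2_hasDeriv (τ : ℝ) {x : ℝ} (hx : 0 < x) :
    HasDerivAt (fun x => sq2 x τ) (x / sq2 x τ) x := by
  have h1 : HasDerivAt (fun x : ℝ => x ^ 2 + τ ^ 2) (2 * x) x := by
    simpa using (hasDerivAt_pow 2 x).add_const (τ ^ 2)
  have h2 := (Real.hasDerivAt_sqrt (by positivity : x ^ 2 + τ ^ 2 ≠ 0)).comp x h1
  have h3 : 1 / (2 * Real.sqrt (x ^ 2 + τ ^ 2)) * (2 * x) = x / sq2 x τ := by
    rw [sq2]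
    have := sq2_pos hx τ
    rw [sq2] at this
    field_simp
  have h4 : (fun x => Real.sqrt x) ∘ (fun x : ℝ => x ^ 2 + τ ^ 2) = fun x => sq2 x τ := rfl
  rw [h4, h3] at h2
  exact h2

/-- Differentiation under the integral sign. -/
lemma deriv_B {g : ℝ → ℝ} (hg : Nice g) (hg' : Nice (DWop g)) {s : ℝ} (hs : 0 < s) :
    HasDerivAt (fun x => ∫ τ in Ioi (0 : ℝ), g (sq2 x τ) / sq2 x τ)
      (s * ∫ τ in Ioi (0 : ℝ), DWop g (sq2 s τ) / sq2 s τ) s := by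
  have hFgc : ContinuousOn (fun r => g r / r) (Ioi 0) :=
    hg.1.continuousOn.div continuousOn_id (fun x hx => ne_of_gt hx)
  have hDWc : ContinuousOn (DWop g) (Ioi 0) := hg'.1.continuousOn
  have hcont : ∀ x : ℝ, 0 < x → ContinuousOn (fun τ => g (sq2 x τ) / sq2 x τ) (Ioi 0) := by
    intro x hx
    have hsq2c : Continuous (fun τ => sq2 x τ) :=
      Real.continuous_sqrt.comp (by continuity)
    exact hFgc.comp hsq2c.continuousOn (fun τ _ => sq2_pos hx τ)
  have hcont' : ContinuousOn (fun τ => DWop g (sq2 s τ) * (s / sq2 s τ)) (Ioi 0) := by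
    have hsq2c : Continuous (fun τ => sq2 s τ) :=
      Real.continuous_sqrt.comp (by continuity)
    exact (hDWc.comp hsq2c.continuousOn (fun τ _ => sq2_pos hs τ)).mul
      (continuousOn_const.div hsq2c.continuousOn (fun τ _ => (sq2_pos hs τ).ne'))
  obtain ⟨C₀, hC₀⟩ := decay2' hg
  obtain ⟨D₀, hD₀0, hD₀⟩ := bound_aux hFgc hC₀ hs (le_refl s)
  obtain ⟨C₁, hC₁⟩ := decay2 hg'
  obtain ⟨D₁, hD₁0, hD₁⟩ := bound_aux hDWc hC₁ (half_pos hs) (by linarith : s/2 ≤ 2*s)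
  have hball : ∀ x ∈ Metric.ball s (s/2), s/2 < x ∧ x < 2*s := by
    intro x hx
    rw [Metric.mem_ball, Real.dist_eq, abs_lt] at hx
    constructor <;> linarith [hx.1, hx.2]
  have key := hasDerivAt_integral_of_dominated_loc_of_deriv_le
    (F := fun x τ => g (sq2 x τ) / sq2 x τ)
    (F' := fun x τ => DWop g (sq2 x τ) * (x / sq2 x τ))
    (μ := volume.restrict (Ioi (0:ℝ))) (x₀ := s)
    (bound := fun τ => D₁ * (1 + τ ^ 2)⁻¹)
    (Metric.ball_mem_nhds s (half_pos hs))
    (by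
      filter_upwards [isOpen_Ioi.eventually_mem (show s ∈ Ioi (0:ℝ) from hs)] with x hx
      exact ((hcont x hx).aestronglyMeasurable measurableSet_Ioi))
    (by
      refine Integrable.mono' ((integrable_inv_one_add_sq.const_mul D₀).restrict)
        ((hcont s hs).aestronglyMeasurable measurableSet_Ioi) ?_
      rw [ae_restrict_iff' measurableSet_Ioi]
      refine ae_of_all _ fun τ hτ => ?_
      rw [Real.norm_eq_abs]
      exact hD₀ s ⟨le_refl s, le_refl s⟩ τ hτ)
    (hcont'.aestronglyMeasurable measurableSet_Ioi)
    (by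
      rw [ae_restrict_iff' measurableSet_Ioi]
      refine ae_of_all _ fun τ hτ x hx => ?_
      obtain ⟨h1, h2⟩ := hball x hx
      have hx0 : 0 < x := lt_trans (half_pos hs) h1
      rw [Real.norm_eq_abs, abs_mul]
      have e1 : |DWop g (sq2 x τ)| ≤ D₁ * (1 + τ ^ 2)⁻¹ :=
        hD₁ x ⟨h1.le, h2.le⟩ τ hτ
      have e2 : |x / sq2 x τ| ≤ 1 := by
        rw [abs_of_pos (div_pos hx0 (sq2_pos hx0 τ)), div_le_one (sq2_pos hx0 τ)]
        exact le_sq2 hx0.le τ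
      calc |DWop g (sq2 x τ)| * |x / sq2 x τ| ≤ (D₁ * (1 + τ ^ 2)⁻¹) * 1 :=
            mul_le_mul e1 e2 (abs_nonneg _) (by positivity)
        _ = D₁ * (1 + τ ^ 2)⁻¹ := by ring)
    ((integrable_inv_one_add_sq.const_mul D₁).restrict)
    (by
      rw [ae_restrict_iff' measurableSet_Ioi]
      refine ae_of_all _ fun τ hτ x hx => ?_
      obtain ⟨h1, h2⟩ := hball x hx
      have hx0 : 0 < x := lt_trans (half_pos hs) h1
      have hpos : sq2 x τ ∈ Ioi (0:ℝ) := sq2_pos hx0 τ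
      have hdFg : DifferentiableAt ℝ (fun r : ℝ => g r / r) (sq2 x τ) :=
        ((hg.1.contDiffAt (isOpen_Ioi.mem_nhds hpos)).differentiableAt (by simp)).div
          differentiableAt_id (ne_of_gt (sq2_pos hx0 τ))
      have houter : HasDerivAt (fun r : ℝ => g r / r) (DWop g (sq2 x τ)) (sq2 x τ) :=
        hdFg.hasDerivAt
      have hinner := sq2_hasDeriv τ hx0
      exact houter.comp x hinner)
  have heq : (∫ τ in Ioi (0:ℝ), DWop g (sq2 s τ) * (s / sq2 s τ))
      = s * ∫ τ in Ioi (0:ℝ), DWop g (sq2 s τ) / sq2 s τ := by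
    rw [← integral_const_mul]
    congr 1
    funext τ
    ring
  rw [heq] at key
  exact key.2

end S17

theorem stmt17 (h : ℝ → ℝ) (hh : ContDiff ℝ (⊤ : ℕ∞) h)
    (hdecay : ∀ m k : ℕ, ∃ C : ℝ, ∀ t : ℝ, 1 ≤ t → |iteratedDeriv m h t| ≤ C * t ^ (-(k : ℝ)))
    (k : ℕ) (s : ℝ) (hs : 0 < s) :
    ∫ t in Set.Ioi s, (DWop^[k] h) t / Real.sqrt (t ^ 2 - s ^ 2)
      = invDerivR^[k] (fun s' => ∫ t in Set.Ioi s', h t / Real.sqrt (t ^ 2 - s' ^ 2)) s := by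
  set A : ℝ → ℝ := fun s' => ∫ t in Set.Ioi s', h t / Real.sqrt (t ^ 2 - s' ^ 2) with hA
  suffices main : ∀ k : ℕ, S17.Nice (DWop^[k] h) ∧ ∀ s : ℝ, 0 < s →
      (∫ t in Set.Ioi s, (DWop^[k] h) t / Real.sqrt (t ^ 2 - s ^ 2))
        = invDerivR^[k] A s by
    exact (main k).2 s hs
  intro k
  induction k with
  | zero =>
    exact ⟨⟨hh.contDiffOn, hdecay⟩, fun s _ => by simp [hA]⟩
  | succ k IH =>
    obtain ⟨nk, ek⟩ := IH
    have nk1 : S17.Nice (DWop^[k+1] h) := by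
      rw [Function.iterate_succ_apply']
      exact S17.nice_DW nk
    refine ⟨nk1, fun s hs => ?_⟩
    have hB := S17.deriv_B nk (S17.nice_DW nk) hs
    have L1 : (∫ t in Set.Ioi s, (DWop^[k+1] h) t / Real.sqrt (t ^ 2 - s ^ 2))
        = ∫ τ in Set.Ioi (0:ℝ), DWop (DWop^[k] h) (S17.sq2 s τ) / S17.sq2 s τ := by
      rw [Function.iterate_succ_apply']
      exact S17.subst (DWop (DWop^[k] h)) hs
    have hev1 : (fun x => ∫ τ in Set.Ioi (0:ℝ), (DWop^[k] h) (S17.sq2 x τ) / S17.sq2 x τ)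
        =ᶠ[nhds s] (invDerivR^[k] A) := by
      filter_upwards [isOpen_Ioi.eventually_mem (show s ∈ Set.Ioi (0:ℝ) from hs)] with x hx
      rw [← S17.subst (DWop^[k] h) hx, ek x hx]
    have hder : deriv (invDerivR^[k] A) s
        = s * ∫ τ in Set.Ioi (0:ℝ), DWop (DWop^[k] h) (S17.sq2 s τ) / S17.sq2 s τ := by
      rw [← hev1.deriv_eq, hB.deriv]
    rw [L1, show invDerivR^[k+1] A = invDerivR (invDerivR^[k] A) from
      Function.iterate_succ_apply' invDerivR k A]
    show _ = deriv (invDerivR^[k] A) s / s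
    rw [hder, mul_div_cancel_left₀ _ (ne_of_gt hs)]

end
end

section
/- Let g : [0,∞) → ℝ be smooth; if n is even assume in addition that g together with all its derivatives decays rapidly at infinity (so that all integrals below converge). Then for every s > 0, s · (d/ds)[ W(g) ](s) = W( t ↦ t·g'(t) )(s) − (n−2) · W(g)(s). -/
open MeasureTheory Function

noncomputable section

section Aux
open Set ContDiff


lemma invDerivR_contDiffOn {u : ℝ → ℝ} (hu : ContDiffOn ℝ ∞ u (Ioi 0)) :
    ContDiffOn ℝ ∞ (invDerivR u) (Ioi 0) := by
  have hd : ContDiffOn ℝ ∞ (deriv u) (Ioi 0) :=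
    hu.deriv_of_isOpen isOpen_Ioi (by exact_mod_cast le_refl _)
  exact hd.div contDiffOn_id (fun x hx => ne_of_gt hx)

lemma iter_contDiffOn (m : ℕ) {u : ℝ → ℝ} (hu : ContDiffOn ℝ ∞ u (Ioi 0)) :
    ContDiffOn ℝ ∞ (invDerivR^[m] u) (Ioi 0) := by
  induction m with
  | zero => exact hu
  | succ m ih => rw [Function.iterate_succ_apply']; exact invDerivR_contDiffOn ih

lemma diffAt_of_contDiffOn {u : ℝ → ℝ} (hu : ContDiffOn ℝ ∞ u (Ioi 0)) {s : ℝ}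
    (hs : 0 < s) : DifferentiableAt ℝ u s := by
  have := (hu.differentiableOn (by simp)).differentiableAt
    (isOpen_Ioi.mem_nhds hs)
  exact this

lemma diffAt_deriv_of_contDiffOn {u : ℝ → ℝ} (hu : ContDiffOn ℝ ∞ u (Ioi 0)) {s : ℝ}
    (hs : 0 < s) : DifferentiableAt ℝ (deriv u) s :=
  diffAt_of_contDiffOn (hu.deriv_of_isOpen isOpen_Ioi (by exact_mod_cast le_refl _)) hs

lemma iter_congr (m : ℕ) {a b : ℝ → ℝ} (hab : ∀ x ∈ Ioi (0:ℝ), a x = b x) :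
    ∀ s ∈ Ioi (0:ℝ), invDerivR^[m] a s = invDerivR^[m] b s := by
  induction m with
  | zero => exact hab
  | succ m ih =>
    intro s hs
    rw [Function.iterate_succ_apply', Function.iterate_succ_apply']
    have h1 : invDerivR^[m] a =ᶠ[nhds s] invDerivR^[m] b :=
      Filter.eventuallyEq_of_mem (isOpen_Ioi.mem_nhds hs) ih
    show deriv _ s / s = deriv _ s / s
    rw [h1.deriv_eq]

lemma iter_sub (m : ℕ) {a b : ℝ → ℝ} (ha : ContDiffOn ℝ ∞ a (Ioi 0))
    (hb : ContDiffOn ℝ ∞ b (Ioi 0)) :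
    ∀ s ∈ Ioi (0:ℝ), invDerivR^[m] (fun x => a x - b x) s
      = invDerivR^[m] a s - invDerivR^[m] b s := by
  induction m with
  | zero => intro s _; rfl
  | succ m ih =>
    intro s hs
    rw [Function.iterate_succ_apply', Function.iterate_succ_apply',
      Function.iterate_succ_apply']
    have h1 : invDerivR^[m] (fun x => a x - b x) =ᶠ[nhds s]
        fun x => invDerivR^[m] a x - invDerivR^[m] b x :=
      Filter.eventuallyEq_of_mem (isOpen_Ioi.mem_nhds hs) ih
    show deriv _ s / s = deriv _ s / s - deriv _ s / s
    rw [h1.deriv_eq, deriv_fun_sub (diffAt_of_contDiffOn (iter_contDiffOn m ha) hs)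
      (diffAt_of_contDiffOn (iter_contDiffOn m hb) hs), sub_div]

/-- Main commutation identity. -/
lemma iter_comm (m : ℕ) {u : ℝ → ℝ} (hu : ContDiffOn ℝ ∞ u (Ioi 0)) :
    ∀ s ∈ Ioi (0:ℝ), invDerivR^[m] (fun x => x * deriv u x) s
      = s * deriv (invDerivR^[m] u) s + 2 * m * invDerivR^[m] u s := by
  induction m with
  | zero =>
    intro s _; simp
  | succ m ih =>
    intro s hs
    have hs0 : s ≠ 0 := ne_of_gt hs
    set w := invDerivR^[m] u with hw
    have hwc : ContDiffOn ℝ ∞ w (Ioi 0) := iter_contDiffOn m hu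
    have hw1 : DifferentiableAt ℝ w s := diffAt_of_contDiffOn hwc hs
    have hw2 : DifferentiableAt ℝ (deriv w) s := diffAt_deriv_of_contDiffOn hwc hs
    have h1 : invDerivR^[m] (fun x => x * deriv u x) =ᶠ[nhds s]
        fun x => x * deriv w x + 2 * m * w x :=
      Filter.eventuallyEq_of_mem (isOpen_Ioi.mem_nhds hs) ih
    rw [Function.iterate_succ_apply']
    show deriv _ s / s = _
    rw [h1.deriv_eq]
    have hda : HasDerivAt (fun x => x * deriv w x + 2 * (m:ℝ) * w x)
        (1 * deriv w s + s * deriv (deriv w) s + 2 * m * deriv w s) s := by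
      exact ((hasDerivAt_id s).mul hw2.hasDerivAt).add
        (hw1.hasDerivAt.const_mul (2 * (m:ℝ)))
    rw [hda.deriv]
    -- RHS
    rw [Function.iterate_succ_apply']
    have hdw : HasDerivAt (invDerivR w)
        ((deriv (deriv w) s * s - deriv w s * 1) / s ^ 2) s :=
      hw2.hasDerivAt.div (hasDerivAt_id s) hs0
    show _ = s * deriv (invDerivR w) s + 2 * (m + 1 : ℕ) * (deriv w s / s)
    rw [hdw.deriv]
    push_cast
    field_simp
    ring



lemma sqrt_ne_aux {x : ℝ} (h1 : 1 < x) : Real.sqrt (x^2 - 1) ≠ 0 :=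
  ne_of_gt (Real.sqrt_pos.mpr (by nlinarith))

lemma aemeas_aux {s : Set ℝ} (hsub : s ⊆ Ioi (1:ℝ)) (hms : MeasurableSet s)
    {v : ℝ → ℝ} (hv : ContinuousOn v s) :
    AEStronglyMeasurable (fun τ : ℝ => v τ / Real.sqrt (τ^2 - 1)) (volume.restrict s) := by
  apply ContinuousOn.aestronglyMeasurable _ hms
  exact ContinuousOn.div hv
    (Real.continuous_sqrt.comp (by continuity)).continuousOn
    (fun x hx => sqrt_ne_aux (hsub hx))

lemma baseIntegrable : IntegrableOn (fun τ : ℝ => τ ^ (-2:ℝ) / Real.sqrt (τ^2 - 1)) (Ioi 1) := by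
  have hmeas : ∀ s ⊆ Ioi (1:ℝ), MeasurableSet s →
      AEStronglyMeasurable (fun τ : ℝ => τ ^ (-2:ℝ) / Real.sqrt (τ^2 - 1))
        (volume.restrict s) := fun s hsub hms =>
    aemeas_aux hsub hms (ContinuousOn.rpow_const continuousOn_id
      (fun x hx => Or.inl (ne_of_gt (lt_trans one_pos (hsub hx)))))
  have h1 : IntegrableOn (fun τ : ℝ => τ ^ (-2:ℝ) / Real.sqrt (τ^2 - 1)) (Ioc 1 2) := by
    have hint : IntegrableOn (fun τ : ℝ => (τ - 1) ^ ((-(1/2) : ℝ))) (Ioc 1 2) := by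
      have h0 := (intervalIntegral.intervalIntegrable_rpow'
        (r := (-(1/2) : ℝ)) (by norm_num) (a := 0) (b := 1)).comp_sub_right 1
      rw [intervalIntegrable_iff_integrableOn_Ioc_of_le (by norm_num)] at h0
      norm_num at h0
      simpa using h0
    apply Integrable.mono hint (hmeas _ Ioc_subset_Ioi_self measurableSet_Ioc)
    rw [ae_restrict_iff' measurableSet_Ioc]
    refine ae_of_all _ (fun τ hτ => ?_)
    obtain ⟨ht1, ht2⟩ := hτ
    have hτ0 : (0:ℝ) < τ := lt_trans one_pos ht1
    have hs1 : Real.sqrt (τ - 1) ≤ Real.sqrt (τ^2 - 1) :=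
      Real.sqrt_le_sqrt (by nlinarith)
    have hrp : τ ^ (-2:ℝ) ≤ 1 := by
      calc τ ^ (-2:ℝ) ≤ 1 ^ (-2:ℝ) :=
            Real.rpow_le_rpow_of_nonpos one_pos (le_of_lt ht1) (by norm_num)
        _ = 1 := Real.one_rpow _
    have hpos2 : (0:ℝ) < Real.sqrt (τ - 1) := Real.sqrt_pos.mpr (by linarith)
    rw [Real.norm_eq_abs, abs_of_nonneg (div_nonneg (Real.rpow_nonneg (le_of_lt hτ0) _)
      (Real.sqrt_nonneg _)), Real.norm_eq_abs,
      abs_of_nonneg (Real.rpow_nonneg (by linarith) _),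
      Real.rpow_neg (by linarith : (0:ℝ) ≤ τ - 1), ← Real.sqrt_eq_rpow, ← one_div]
    exact div_le_div₀ zero_le_one hrp hpos2 hs1
  have h2 : IntegrableOn (fun τ : ℝ => τ ^ (-2:ℝ) / Real.sqrt (τ^2 - 1)) (Ioi 2) := by
    apply Integrable.mono (integrableOn_Ioi_rpow_of_lt (by norm_num : (-2:ℝ) < -1)
      (by norm_num : (0:ℝ) < 2)) (hmeas _ (fun x (hx : (2:ℝ) < x) => lt_trans one_lt_two hx) measurableSet_Ioi)
    rw [ae_restrict_iff' measurableSet_Ioi]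
    refine ae_of_all _ (fun τ hτ => ?_)
    have ht2 : (2:ℝ) < τ := hτ
    have hτ0 : (0:ℝ) < τ := by linarith
    have hsq : (1:ℝ) ≤ Real.sqrt (τ^2 - 1) := by
      have h4 := Real.sqrt_le_sqrt (show (1:ℝ) ≤ τ^2 - 1 by nlinarith)
      rwa [Real.sqrt_one] at h4
    rw [Real.norm_eq_abs, abs_of_nonneg (div_nonneg (Real.rpow_nonneg (le_of_lt hτ0) _)
      (Real.sqrt_nonneg _)), Real.norm_eq_abs,
      abs_of_nonneg (Real.rpow_nonneg (le_of_lt hτ0) _)]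
    calc τ ^ (-2:ℝ) / Real.sqrt (τ^2-1) ≤ τ ^ (-2:ℝ) / 1 :=
          div_le_div_of_nonneg_left (Real.rpow_nonneg (le_of_lt hτ0) _) one_pos hsq
      _ = τ ^ (-2:ℝ) := div_one _
  have h3 := h1.union h2
  rwa [Ioc_union_Ioi_eq_Ioi (by norm_num : (1:ℝ) ≤ 2)] at h3




lemma pointBound (j : ℕ) {h : ℝ → ℝ} (hc : Continuous h) {s : ℝ} (hs : 0 < s)
    {C : ℝ} (hC : ∀ t : ℝ, 1 ≤ t → |h t| ≤ C * t ^ (-((j:ℝ)+2))) :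
    ∃ A : ℝ, ∀ x : ℝ, s/2 ≤ x → ∀ τ : ℝ, 1 ≤ τ →
      |τ^j * h (x*τ)| ≤ A * τ ^ (-2:ℝ) := by
  obtain ⟨M, hM⟩ := (isCompact_Icc (a := (0:ℝ)) (b := 1)).exists_bound_of_continuousOn
    hc.continuousOn
  have hM0 : 0 ≤ M := le_trans (norm_nonneg _) (hM 0 (by constructor <;> norm_num))
  set T : ℝ := max 1 (2/s) with hT
  have hT1 : (1:ℝ) ≤ T := le_max_left _ _
  have hT0 : (0:ℝ) < T := lt_of_lt_of_le one_pos hT1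
  set A : ℝ := max (M * T ^ ((j:ℝ)+2)) (|C| * (s/2) ^ (-((j:ℝ)+2))) with hA
  refine ⟨A, fun x hx τ hτ => ?_⟩
  have hx0 : (0:ℝ) < x := lt_of_lt_of_le (by linarith) hx
  have hτ0 : (0:ℝ) < τ := lt_of_lt_of_le one_pos hτ
  have hbase : |h (x*τ)| ≤ A * τ ^ (-((j:ℝ)+2)) := by
    rcases le_or_gt 1 (x*τ) with hxt | hxt
    · have h1 := hC (x*τ) hxt
      have h2 : (x*τ) ^ (-((j:ℝ)+2)) = x ^ (-((j:ℝ)+2)) * τ ^ (-((j:ℝ)+2)) :=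
        Real.mul_rpow (le_of_lt hx0) (le_of_lt hτ0)
      have h3 : x ^ (-((j:ℝ)+2)) ≤ (s/2) ^ (-((j:ℝ)+2)) :=
        Real.rpow_le_rpow_of_nonpos (by linarith) hx (neg_nonpos.mpr (by positivity))
      have h4 : C * (x*τ) ^ (-((j:ℝ)+2)) ≤ |C| * ((s/2) ^ (-((j:ℝ)+2)) * τ ^ (-((j:ℝ)+2))) := by
        rw [h2]
        have hτr : (0:ℝ) ≤ τ ^ (-((j:ℝ)+2)) := Real.rpow_nonneg (le_of_lt hτ0) _
        have hxr : (0:ℝ) ≤ x ^ (-((j:ℝ)+2)) := Real.rpow_nonneg (le_of_lt hx0) _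
        calc C * (x ^ (-((j:ℝ)+2)) * τ ^ (-((j:ℝ)+2)))
            ≤ |C| * (x ^ (-((j:ℝ)+2)) * τ ^ (-((j:ℝ)+2))) := by
              apply mul_le_mul_of_nonneg_right (le_abs_self C) (by positivity)
          _ ≤ |C| * ((s/2) ^ (-((j:ℝ)+2)) * τ ^ (-((j:ℝ)+2))) := by
              apply mul_le_mul_of_nonneg_left _ (abs_nonneg C)
              exact mul_le_mul_of_nonneg_right h3 hτr
      calc |h (x*τ)| ≤ C * (x*τ) ^ (-((j:ℝ)+2)) := h1
        _ ≤ |C| * (s/2) ^ (-((j:ℝ)+2)) * τ ^ (-((j:ℝ)+2)) := by rw [mul_assoc]; exact h4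
        _ ≤ A * τ ^ (-((j:ℝ)+2)) :=
            mul_le_mul_of_nonneg_right (le_max_right _ _)
              (Real.rpow_nonneg (le_of_lt hτ0) _)
    · -- x*τ < 1
      have hmem : x*τ ∈ Icc (0:ℝ) 1 := ⟨by positivity, le_of_lt hxt⟩
      have h1 : |h (x*τ)| ≤ M := by simpa using hM _ hmem
      have hτT : τ ≤ T := by
        have : τ < 1/x := by rw [lt_div_iff₀ hx0]; linarith [mul_comm x τ]
        have h2 : (1:ℝ)/x ≤ 2/s := by
          rw [div_le_div_iff₀ hx0 hs]; linarith
        exact le_trans (le_of_lt this) (le_trans h2 (le_max_right _ _))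
      have h2 : τ ^ (-((j:ℝ)+2)) ≥ T ^ (-((j:ℝ)+2)) :=
        Real.rpow_le_rpow_of_nonpos hτ0 hτT (neg_nonpos.mpr (by positivity))
      have h3 : M ≤ M * T ^ ((j:ℝ)+2) * T ^ (-((j:ℝ)+2)) := by
        have he : ((j:ℝ) + 2) + (-((j:ℝ)+2)) = 0 := by ring
        rw [mul_assoc, ← Real.rpow_add hT0, he, Real.rpow_zero, mul_one]
      calc |h (x*τ)| ≤ M := h1
        _ ≤ M * T ^ ((j:ℝ)+2) * T ^ (-((j:ℝ)+2)) := h3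
        _ ≤ A * τ ^ (-((j:ℝ)+2)) := by
            have hb : (0:ℝ) ≤ A :=
              le_trans (mul_nonneg hM0 (Real.rpow_nonneg (le_of_lt hT0) _))
                (le_max_left _ _)
            exact mul_le_mul (le_max_left _ _) h2 (Real.rpow_nonneg (le_of_lt hT0) _) hb
  calc |τ^j * h (x*τ)| = τ^(j:ℕ) * |h (x*τ)| := by
        rw [abs_mul, abs_of_nonneg (by positivity : (0:ℝ) ≤ τ^j)]
    _ ≤ τ^(j:ℕ) * (A * τ ^ (-((j:ℝ)+2))) :=
        mul_le_mul_of_nonneg_left hbase (by positivity)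
    _ = A * τ ^ (-2:ℝ) := by
        rw [← Real.rpow_natCast τ j]
        rw [mul_comm, mul_assoc, ← Real.rpow_add hτ0]
        norm_num




def Uop (j : ℕ) (h : ℝ → ℝ) (s : ℝ) : ℝ :=
  ∫ τ in Set.Ioi (1:ℝ), τ^j * h (s*τ) / Real.sqrt (τ^2 - 1)

lemma norm_Faux {k : ℕ} {w τ : ℝ} (hτ : 1 < τ) {A : ℝ}
    (habs : |τ^k * w| ≤ A * τ ^ (-2:ℝ)) :
    ‖τ^k * w / Real.sqrt (τ^2 - 1)‖ ≤ A * (τ ^ (-2:ℝ) / Real.sqrt (τ^2 - 1)) := by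
  have hsq : (0:ℝ) ≤ Real.sqrt (τ^2 - 1) := Real.sqrt_nonneg _
  rw [Real.norm_eq_abs, abs_div, abs_of_nonneg hsq, ← mul_div_assoc]
  gcongr

lemma cont_aux1 {j : ℕ} {h : ℝ → ℝ} (hc : Continuous h) (x : ℝ) :
    Continuous (fun τ : ℝ => τ^j * h (x*τ)) :=
  (continuous_pow j).mul (hc.comp (continuous_const.mul continuous_id))

lemma integrable_Faux (j : ℕ) {v : ℝ → ℝ} (hv : Continuous v) {A : ℝ}
    (hb : ∀ τ : ℝ, 1 ≤ τ → |τ^j * v τ| ≤ A * τ ^ (-2:ℝ)) :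
    IntegrableOn (fun τ : ℝ => τ^j * v τ / Real.sqrt (τ^2 - 1)) (Ioi 1) := by
  apply Integrable.mono (baseIntegrable.const_mul A)
    (aemeas_aux (le_refl _) measurableSet_Ioi
      ((continuous_pow j |>.mul hv).continuousOn))
  rw [ae_restrict_iff' measurableSet_Ioi]
  refine ae_of_all _ (fun τ hτ => ?_)
  have h1 : (1:ℝ) < τ := hτ
  have h2 := norm_Faux h1 (hb τ (le_of_lt h1))
  rw [Real.norm_eq_abs (A * _)]
  exact le_trans h2 (le_abs_self _)

lemma hasDerivAt_Uop (j : ℕ) {h : ℝ → ℝ} (hd : Differentiable ℝ h)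
    (hdc : Continuous (deriv h))
    (hdec : ∀ k : ℕ, ∃ C, ∀ t : ℝ, 1 ≤ t → |h t| ≤ C * t ^ (-(k:ℝ)))
    (hdec' : ∀ k : ℕ, ∃ C, ∀ t : ℝ, 1 ≤ t → |deriv h t| ≤ C * t ^ (-(k:ℝ)))
    {s : ℝ} (hs : 0 < s) :
    HasDerivAt (Uop j h) (Uop (j+1) (deriv h) s) s := by
  have hc : Continuous h := hd.continuous
  obtain ⟨C, hC⟩ := hdec (j+2)
  obtain ⟨C', hC'⟩ := hdec' (j+3)
  have hCe : ∀ t : ℝ, 1 ≤ t → |h t| ≤ C * t ^ (-((j:ℝ)+2)) := by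
    intro t ht
    have h0 := hC t ht
    rwa [show (-(((j+2:ℕ)):ℝ)) = -((j:ℝ)+2) by push_cast; ring] at h0
  have hCe' : ∀ t : ℝ, 1 ≤ t → |deriv h t| ≤ C' * t ^ (-(((j+1:ℕ)):ℝ)-2) := by
    intro t ht
    have h0 := hC' t ht
    rwa [show (-(((j+3:ℕ)):ℝ)) = -(((j+1:ℕ)):ℝ)-2 by push_cast; ring] at h0
  obtain ⟨A, hA⟩ := pointBound j hc hs hCe
  obtain ⟨A', hA'⟩ := pointBound (j+1) hdc hs (by
    intro t ht
    have h0 := hCe' t ht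
    rwa [show (-(((j+1:ℕ)):ℝ)-2) = -(((j+1:ℕ):ℝ)+2) by ring] at h0)
  have hball : ∀ x ∈ Metric.ball s (s/2), s/2 ≤ x := by
    intro x hx
    rw [Metric.mem_ball, Real.dist_eq, abs_lt] at hx
    linarith [hx.1]
  have key := hasDerivAt_integral_of_dominated_loc_of_deriv_le
    (F := fun x τ => τ^j * h (x*τ) / Real.sqrt (τ^2 - 1))
    (F' := fun x τ => τ^(j+1) * deriv h (x*τ) / Real.sqrt (τ^2 - 1))
    (x₀ := s) (μ := volume.restrict (Ioi 1))
    (bound := fun τ => A' * (τ ^ (-2:ℝ) / Real.sqrt (τ^2 - 1)))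
    (s := Metric.ball s (s/2)) (Metric.ball_mem_nhds _ (by linarith))
    (Filter.Eventually.of_forall (fun x =>
      aemeas_aux (le_refl _) measurableSet_Ioi (cont_aux1 hc x).continuousOn))
    (integrable_Faux j (hc.comp (continuous_const.mul continuous_id))
      (hA s (by linarith)))
    (aemeas_aux (le_refl _) measurableSet_Ioi (cont_aux1 hdc s).continuousOn)
    ?_ (baseIntegrable.const_mul A') ?_
  · exact key.2
  · rw [ae_restrict_iff' measurableSet_Ioi]
    refine ae_of_all _ (fun τ hτ x hx => ?_)
    exact norm_Faux hτ (hA' x (hball x hx) τ (le_of_lt hτ))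
  · refine ae_of_all _ (fun τ x _ => ?_)
    have hb : HasDerivAt (fun y : ℝ => y * τ) τ x := hasDerivAt_mul_const τ
    have hder : HasDerivAt h (deriv h (x*τ)) (x*τ) := (hd (x*τ)).hasDerivAt
    have hcomp : HasDerivAt (fun y => h (y*τ)) (deriv h (x*τ) * τ) x :=
      HasDerivAt.comp x hder hb
    have h5 := (hcomp.const_mul (τ^j)).div_const (Real.sqrt (τ^2 - 1))
    convert h5 using 1
    all_goals first | rfl | ring



def Pd (h : ℝ → ℝ) : Prop :=
  ContDiff ℝ ∞ h ∧ ∀ m k : ℕ, ∃ C, ∀ t : ℝ, 1 ≤ t →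
    |iteratedDeriv m h t| ≤ C * t ^ (-(k:ℝ))

lemma Pd.deriv' {h : ℝ → ℝ} (hp : Pd h) : Pd (deriv h) := by
  constructor
  · exact (contDiff_infty_iff_deriv.mp hp.1).2
  · intro m k
    obtain ⟨C, hC⟩ := hp.2 (m+1) k
    exact ⟨C, fun t ht => by rw [← iteratedDeriv_succ']; exact hC t ht⟩

lemma Pd.hasDerivAt_Uop' {h : ℝ → ℝ} (hp : Pd h) (j : ℕ) {s : ℝ} (hs : 0 < s) :
    HasDerivAt (Uop j h) (Uop (j+1) (deriv h) s) s := by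
  apply hasDerivAt_Uop j (hp.1.differentiable (by simp))
    (hp.deriv'.1.continuous)
  · intro k
    obtain ⟨C, hC⟩ := hp.2 0 k
    exact ⟨C, fun t ht => by have := hC t ht; rwa [iteratedDeriv_zero] at this⟩
  · intro k
    obtain ⟨C, hC⟩ := hp.2 1 k
    exact ⟨C, fun t ht => by have := hC t ht; rwa [iteratedDeriv_one] at this⟩
  · exact hs

lemma contDiffOn_Uop_nat (N : ℕ) : ∀ (j : ℕ) (h : ℝ → ℝ), Pd h →
    ContDiffOn ℝ N (Uop j h) (Ioi 0) := by
  induction N with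
  | zero =>
    intro j h hp
    rw [show ((0:ℕ) : WithTop ℕ∞) = 0 by rfl, contDiffOn_zero]
    exact fun s hs => ((hp.hasDerivAt_Uop' j hs).continuousAt).continuousWithinAt
  | succ N ih =>
    intro j h hp
    rw [show (((N+1:ℕ)) : WithTop ℕ∞) = (N : WithTop ℕ∞) + 1 by push_cast; rfl,
      contDiffOn_succ_iff_deriv_of_isOpen isOpen_Ioi]
    refine ⟨fun s hs => ((hp.hasDerivAt_Uop' j hs).differentiableAt).differentiableWithinAt,
      by simp, ?_⟩
    exact (ih (j+1) (deriv h) hp.deriv').congr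
      (fun x hx => (hp.hasDerivAt_Uop' j hx).deriv)

lemma contDiffOn_Uop {h : ℝ → ℝ} (hp : Pd h) (j : ℕ) :
    ContDiffOn ℝ ∞ (Uop j h) (Ioi 0) :=
  contDiffOn_infty.mpr (fun N => contDiffOn_Uop_nat N j h hp)

/-- Change of variables `t = s τ`. -/
lemma changeVar {v : ℝ → ℝ} {s : ℝ} (hs : 0 < s) :
    (∫ t in Ioi s, v t / Real.sqrt (t^2 - s^2)) = Uop 0 v s := by
  have key := integral_comp_mul_right_Ioi (fun t => v t / Real.sqrt (t^2 - s^2)) 1 hs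
  rw [one_mul] at key
  have h2 : ∀ τ ∈ Ioi (1:ℝ),
      v (τ * s) / Real.sqrt ((τ*s)^2 - s^2) = s⁻¹ * (τ^0 * v (s*τ) / Real.sqrt (τ^2 - 1)) := by
    intro τ hτ
    have hτ1 : (1:ℝ) < τ := hτ
    have h3 : Real.sqrt ((τ*s)^2 - s^2) = s * Real.sqrt (τ^2 - 1) := by
      rw [show (τ*s)^2 - s^2 = s^2 * (τ^2 - 1) by ring, Real.sqrt_mul (sq_nonneg s),
        Real.sqrt_sq (le_of_lt hs)]
    rw [h3, pow_zero, one_mul, mul_comm τ s]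
    have hsq : (0:ℝ) < Real.sqrt (τ^2 - 1) := Real.sqrt_pos.mpr (by nlinarith)
    field_simp
  rw [setIntegral_congr_fun measurableSet_Ioi h2] at key
  rw [integral_const_mul] at key
  have hs' : (s : ℝ) ≠ 0 := ne_of_gt hs
  rw [smul_eq_mul] at key
  rw [Uop]
  exact (mul_left_cancel₀ (inv_ne_zero hs') key).symm

end Aux

theorem stmt18 {n : ℕ} (hn : 2 ≤ n) (g : ℝ → ℝ) (hg : ContDiff ℝ (⊤ : ℕ∞) g)
    (hdecay : Even n → ∀ m k : ℕ, ∃ C : ℝ, ∀ t : ℝ, 1 ≤ t →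
      |iteratedDeriv m g t| ≤ C * t ^ (-(k : ℝ)))
    (s : ℝ) (hs : 0 < s) :
    s * deriv (fun s' => Wtr n g s') s
      = Wtr n (fun t => t * deriv g t) s - ((n : ℝ) - 2) * Wtr n g s := by
  have hsmem : s ∈ Set.Ioi (0:ℝ) := hs
  have hg' : ContDiff ℝ (((⊤:ℕ∞)) : WithTop ℕ∞) g := hg.of_le (by simp)
  by_cases he : Even n
  · -- even case
    obtain ⟨k, hk⟩ : ∃ k, n = 2*k + 2 := by
      rcases he with ⟨p, hp⟩; exact ⟨p - 1, by omega⟩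
    have hk2 : (n - 2)/2 = k := by omega
    have hPd : Pd g := ⟨hg', hdecay he⟩
    have hU : ContDiffOn ℝ (((⊤:ℕ∞)) : WithTop ℕ∞) (Uop 0 g) (Set.Ioi 0) :=
      contDiffOn_Uop hPd 0
    set c := cnConst n with hc
    set h : ℝ → ℝ := fun t => t * deriv g t with hh
    -- replace the kernels by Uop on Ioi 0
    have h1 : ∀ x ∈ Set.Ioi (0:ℝ),
        invDerivR^[k] (fun s' => ∫ t in Set.Ioi s', g t / Real.sqrt (t^2 - s'^2)) x
          = invDerivR^[k] (Uop 0 g) x :=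
      iter_congr k (fun x hx => by rw [changeVar hx])
    have h2 : ∀ x ∈ Set.Ioi (0:ℝ),
        invDerivR^[k] (fun s' => ∫ t in Set.Ioi s', h t / Real.sqrt (t^2 - s'^2)) x
          = invDerivR^[k] (Uop 0 h) x :=
      iter_congr k (fun x hx => by rw [changeVar hx])
    have hL : ∀ x ∈ Set.Ioi (0:ℝ), x * deriv (Uop 0 g) x = Uop 0 h x := by
      intro x hx
      rw [(hPd.hasDerivAt_Uop' 0 hx).deriv]
      rw [Uop, Uop, ← MeasureTheory.integral_const_mul]
      apply MeasureTheory.setIntegral_congr_fun measurableSet_Ioi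
      intro τ _
      simp only [hh]
      ring
    have h3 : ∀ x ∈ Set.Ioi (0:ℝ),
        invDerivR^[k] (Uop 0 h) x = invDerivR^[k] (fun y => y * deriv (Uop 0 g) y) x :=
      iter_congr k (fun x hx => (hL x hx).symm)
    have hdiff : DifferentiableAt ℝ (invDerivR^[k] (Uop 0 g)) s :=
      diffAt_of_contDiffOn (iter_contDiffOn k hU) hs
    have hev : (fun s' => Wtr n g s') =ᶠ[nhds s]
        (fun s' => c * invDerivR^[k] (Uop 0 g) s') := by
      apply Filter.eventuallyEq_of_mem (isOpen_Ioi.mem_nhds hsmem)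
      intro x hx
      simp only [Wtr, if_pos he, hk2]
      rw [h1 x hx]
    have hcomm := iter_comm k hU s hsmem
    have hWg : Wtr n g s = c * invDerivR^[k] (Uop 0 g) s := by
      simp only [Wtr, if_pos he, hk2]; rw [h1 s hsmem]
    have hWh : Wtr n h s = c * invDerivR^[k] (fun y => y * deriv (Uop 0 g) y) s := by
      simp only [Wtr, if_pos he, hk2]
      rw [h2 s hsmem, h3 s hsmem]
    have hcast : ((n:ℝ) - 2) = 2 * k := by rw [hk]; push_cast; ring
    rw [hev.deriv_eq, deriv_const_mul _ hdiff, hWh, hWg, hcast, hcomm]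
    ring
  · -- odd case
    have hodd : ¬ Even n := he
    obtain ⟨k, hk⟩ : ∃ k, n = 2*k + 3 := by
      rcases Nat.even_or_odd n with h | h
      · exact absurd h hodd
      · rcases h with ⟨p, hp⟩; exact ⟨p - 1, by omega⟩
    have hk2 : (n - 3)/2 = k := by omega
    set c := cnConst n with hc
    set u : ℝ → ℝ := fun x => g x / x with hu
    set u' : ℝ → ℝ := fun x => (x * deriv g x) / x with hu'
    have hgc : ContDiffOn ℝ (((⊤:ℕ∞)) : WithTop ℕ∞) g (Set.Ioi 0) := hg'.contDiffOn
    have hui : ContDiffOn ℝ (((⊤:ℕ∞)) : WithTop ℕ∞) u (Set.Ioi 0) :=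
      hgc.div contDiffOn_id (fun x hx => ne_of_gt hx)
    have hgd : ContDiff ℝ (((⊤:ℕ∞)) : WithTop ℕ∞) (deriv g) :=
      (contDiff_infty_iff_deriv.mp hg').2
    have hui' : ContDiffOn ℝ (((⊤:ℕ∞)) : WithTop ℕ∞) u' (Set.Ioi 0) :=
      ((contDiff_id.mul hgd).contDiffOn).div contDiffOn_id (fun x hx => ne_of_gt hx)
    have hLu : ∀ x ∈ Set.Ioi (0:ℝ), x * deriv u x = u' x - u x := by
      intro x hx
      have hx0 : (x:ℝ) ≠ 0 := ne_of_gt hx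
      have hdg : HasDerivAt g (deriv g x) x :=
        ((hg'.differentiable (by simp)) x).hasDerivAt
      have hdu : HasDerivAt u ((deriv g x * x - g x * 1) / x^2) x :=
        hdg.div (hasDerivAt_id x) hx0
      rw [hdu.deriv]
      simp only [hu', hu]
      field_simp
    have h4 : ∀ x ∈ Set.Ioi (0:ℝ),
        invDerivR^[k] (fun y => y * deriv u y) x
          = invDerivR^[k] (fun y => u' y - u y) x :=
      iter_congr k hLu
    have hcomm := iter_comm k hui s hsmem
    have hsub := iter_sub k hui' hui s hsmem
    have hdiff : DifferentiableAt ℝ (invDerivR^[k] u) s :=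
      diffAt_of_contDiffOn (iter_contDiffOn k hui) hs
    have hcast : ((n:ℝ) - 2) = 2 * k + 1 := by rw [hk]; push_cast; ring
    have hWg : ∀ x, Wtr n g x = c * invDerivR^[k] u x := by
      intro x; simp only [Wtr, if_neg he, hk2, hu, hc]
    have hWh : Wtr n (fun t => t * deriv g t) s = c * invDerivR^[k] u' s := by
      simp only [Wtr, if_neg he, hk2, hu', hc]
    have hder : deriv (fun s' => Wtr n g s') s = c * deriv (invDerivR^[k] u) s := by
      have : (fun s' => Wtr n g s') = fun s' => c * invDerivR^[k] u s' := funext hWg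
      rw [this, deriv_const_mul _ hdiff]
    rw [hder, hWh, hWg, hcast]
    rw [h4 s hsmem, hsub] at hcomm
    -- hcomm : s * deriv (invDerivR^[k] u) s + 2*k*invDerivR^[k] u s = D^[k] u' s - D^[k] u s   (direction?)
    have : s * deriv (invDerivR^[k] u) s
        = invDerivR^[k] u' s - invDerivR^[k] u s - 2 * k * invDerivR^[k] u s := by
      linarith [hcomm]
    calc s * (c * deriv (invDerivR^[k] u) s)
        = c * (s * deriv (invDerivR^[k] u) s) := by ring
      _ = c * (invDerivR^[k] u' s - invDerivR^[k] u s - 2 * k * invDerivR^[k] u s) := by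
          rw [this]
      _ = c * invDerivR^[k] u' s - (2 * (k:ℝ) + 1) * (c * invDerivR^[k] u s) := by ring

end
end
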